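/- arXiv:2601.07747 — 3 statements merged into one kernel-verified Lean document; each statement's English description precedes it below -/
import Mathlib

section
/- Let 𝕆ω be a field of omega-series in a log-atomic monomial T, and write f^† = f'/f. Let f ∈ 𝕆ω be such that f ≉ T^k for every k ∈ ℕ. If f^† ≻ 1/T, then f^{(n+1)} ∼ (f^†)^{n+1}·f for all n ∈ ℕ. -/
/-!
Interface axiomatization of fields of transseries and omega-series, following
Berarducci–Mantova.  We do not construct Hahn fields; instead we record, as a
structure, the properties of the field of omega-series `𝕆ω` in a log-atomic
monomial `T` (an ordered field containing `ℝ`, with `exp`/`log`, the class `J`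
of purely infinite series, and the strongly `ℝ`-linear derivation `D`), and,
as a second structure, the composition `f ∘ x` of omega-series `f` with
elements `x > ℝ` of a confluent field of transseries `𝕌` (confluence is
precisely what guarantees the existence of such a composition, which we take
as primitive data).
-/

/-- Dominance: `a ≼ b` iff `|a| ≤ n * |b|` for some natural number `n`. -/
def domLE {K : Type*} [Field K] [LinearOrder K] [IsStrictOrderedRing K] (a b : K) : Prop :=
  ∃ n : ℕ, |a| ≤ (n : K) * |b|

/-- `a ≺ b` iff `a ≼ b` and `¬ b ≼ a` (equivalently `n * |a| < |b|` for all `n`). -/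
def domLT {K : Type*} [Field K] [LinearOrder K] [IsStrictOrderedRing K] (a b : K) : Prop :=
  domLE a b ∧ ¬ domLE b a

/-- `a ≍ b` iff `a ≼ b` and `b ≼ a`. -/
def domEq {K : Type*} [Field K] [LinearOrder K] [IsStrictOrderedRing K] (a b : K) : Prop :=
  domLE a b ∧ domLE b a

/-- Asymptotic equivalence: `a ∼ b` iff `a - b ≺ a`. -/
def domSim {K : Type*} [Field K] [LinearOrder K] [IsStrictOrderedRing K] (a b : K) : Prop :=
  domLT (a - b) a

/-- `x > ℝ`: `x` is larger than every real number (via the embedding `emb`). -/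
def gtReals {K : Type*} [Field K] [LinearOrder K] [IsStrictOrderedRing K] (emb : ℝ →+* K) (x : K) : Prop :=
  ∀ r : ℝ, emb r < x

/-- Interface for a field of omega-series `𝕆ω` in a log-atomic monomial `T`:
an ordered field containing `ℝ`, equipped with `exp` and `log`, the
distinguished log-atomic element `T > ℝ`, the additive group `J` of purely
infinite series, and the strongly `ℝ`-linear derivation `D` determined by
`D T = 1` and `D (exp γ) = exp γ * D γ`. -/
structure OmegaFieldStruct (O : Type*) [Field O] [LinearOrder O] [IsStrictOrderedRing O] where
  /-- the embedding of the real numbers (series with a single constant term) -/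
  emb : ℝ →+* O
  /-- the log-atomic monomial `T` -/
  T : O
  /-- the (total) exponential, inverse of `log` -/
  exp : O → O
  /-- the logarithm (meaningful on positive elements) -/
  log : O → O
  /-- the class of purely infinite series -/
  J : Set O
  /-- the derivation -/
  D : O → O
  T_gt_reals : gtReals emb T
  exp_add : ∀ a b : O, exp (a + b) = exp a * exp b
  exp_pos : ∀ a : O, 0 < exp a
  exp_strictMono : StrictMono exp
  log_exp : ∀ a : O, log (exp a) = a
  exp_log : ∀ a : O, 0 < a → exp (log a) = a
  exp_emb : ∀ r : ℝ, exp (emb r) = emb (Real.exp r)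
  /-- growth axiom: `(log 𝔪)^n < 𝔪`, extended to all positive infinite elements -/
  log_pow_lt : ∀ a : O, gtReals emb a → ∀ n : ℕ, (log a) ^ n < a
  J_zero : (0 : O) ∈ J
  J_add : ∀ a ∈ J, ∀ b ∈ J, a + b ∈ J
  J_neg : ∀ a ∈ J, -a ∈ J
  /-- purely infinite series are either zero or dominate `1` -/
  J_infinite : ∀ γ ∈ J, γ ≠ 0 → domLT 1 γ
  /-- `T` is log-atomic: its iterated logarithms are monomials `> 1`,
  hence purely infinite -/
  logIter_T_mem_J : ∀ n : ℕ, (log)^[n] T ∈ J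
  D_add : ∀ a b : O, D (a + b) = D a + D b
  D_mul : ∀ a b : O, D (a * b) = D a * b + a * D b
  D_T : D T = 1
  D_emb : ∀ r : ℝ, D (emb r) = 0
  D_exp : ∀ a : O, D (exp a) = exp a * D a
  /-- the H-field property: positive infinite elements have positive derivative -/
  D_pos_of_gt_reals : ∀ a : O, gtReals emb a → 0 < D a
  /-- the constants of the derivation are exactly the reals -/
  D_eq_zero_iff : ∀ a : O, D a = 0 ↔ ∃ r : ℝ, a = emb r

section DomLemmas

variable {K : Type*} [Field K] [LinearOrder K] [IsStrictOrderedRing K] {a b c d a' : K}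

lemma not_domLE_iff : ¬ domLE b a ↔ ∀ n : ℕ, (n : K) * |a| < |b| := by
  simp [domLE, not_exists, not_le]

lemma domLE_zero_left : domLE (0 : K) a := ⟨0, by simp⟩

lemma eq_zero_of_domLE_zero (h : domLE a 0) : a = 0 := by
  obtain ⟨n, hn⟩ := h
  simp only [abs_zero, mul_zero] at hn
  exact abs_eq_zero.mp (le_antisymm hn (abs_nonneg a))

lemma domLE_refl : domLE a a := ⟨1, by simp⟩

lemma domLE.trans (h1 : domLE a b) (h2 : domLE b c) : domLE a c := by
  obtain ⟨m, hm⟩ := h1; obtain ⟨n, hn⟩ := h2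
  refine ⟨m * n, ?_⟩
  push_cast
  calc |a| ≤ (m : K) * |b| := hm
    _ ≤ (m : K) * ((n : K) * |c|) := by
        apply mul_le_mul_of_nonneg_left hn (by positivity)
    _ = (m : K) * (n : K) * |c| := by ring

lemma ne_zero_of_domLT (h : domLT a b) : b ≠ 0 := by
  intro hb
  exact h.2 (hb ▸ domLE_zero_left)

lemma domLT_of_domLE_of_domLT (h1 : domLE a b) (h2 : domLT b c) : domLT a c :=
  ⟨h1.trans h2.1, fun h => h2.2 (h.trans h1)⟩

lemma domLT_of_domLT_of_domLE (h1 : domLT a b) (h2 : domLE b c) : domLT a c :=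
  ⟨h1.1.trans h2, fun h => h1.2 (h2.trans h)⟩

lemma zero_domLT (h : a ≠ 0) : domLT (0 : K) a :=
  ⟨domLE_zero_left, fun hc => h (eq_zero_of_domLE_zero hc)⟩

lemma domLT_add (h1 : domLT a c) (h2 : domLT b c) : domLT (a + b) c := by
  obtain ⟨m, hm⟩ := h1.1; obtain ⟨n, hn⟩ := h2.1
  constructor
  · refine ⟨m + n, ?_⟩
    push_cast
    calc |a + b| ≤ |a| + |b| := abs_add_le _ _
      _ ≤ (m : K) * |c| + (n : K) * |c| := add_le_add hm hn
      _ = ((m : K) + n) * |c| := by ring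
  · rintro ⟨k, hk⟩
    have ha := (not_domLE_iff.mp h1.2) (2 * k)
    have hb := (not_domLE_iff.mp h2.2) (2 * k)
    push_cast at ha hb
    have habs : |a + b| ≤ |a| + |b| := abs_add_le _ _
    rcases Nat.eq_zero_or_pos k with hk0 | hk0
    · subst hk0
      simp only [Nat.cast_zero, zero_mul] at hk
      have hc0 : |c| = 0 := le_antisymm hk (abs_nonneg _)
      rw [hc0] at ha
      nlinarith [abs_nonneg a]
    · have hkpos : (0 : K) < (k : K) := by exact_mod_cast hk0
      nlinarith [abs_nonneg a, abs_nonneg b, abs_nonneg c]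

lemma domLE_mul (h1 : domLE a b) (h2 : domLE c d) : domLE (a * c) (b * d) := by
  obtain ⟨m, hm⟩ := h1; obtain ⟨n, hn⟩ := h2
  refine ⟨m * n, ?_⟩
  push_cast
  rw [abs_mul, abs_mul]
  calc |a| * |c| ≤ ((m : K) * |b|) * ((n : K) * |d|) :=
        mul_le_mul hm hn (abs_nonneg _) (le_trans (abs_nonneg _) hm)
    _ = (m : K) * (n : K) * (|b| * |d|) := by ring

lemma domLT_mul_right (h : domLT a b) (hc : c ≠ 0) : domLT (a * c) (b * c) := by
  constructor
  · exact domLE_mul h.1 domLE_refl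
  · rintro ⟨k, hk⟩
    apply h.2
    refine ⟨k, ?_⟩
    rw [abs_mul, abs_mul] at hk
    have hcpos : (0 : K) < |c| := abs_pos.mpr hc
    have hk2 : |b| * |c| ≤ ((k : K) * |a|) * |c| := by
      calc |b| * |c| ≤ (k : K) * (|a| * |c|) := hk
        _ = ((k : K) * |a|) * |c| := by ring
    exact le_of_mul_le_mul_right hk2 hcpos

lemma domLT_mul_of_domLE_of_domLT (h1 : domLE a b) (h2 : domLT c d) (hb : b ≠ 0) :
    domLT (a * c) (b * d) := by
  constructor
  · exact domLE_mul h1 h2.1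
  · rintro ⟨k, hk⟩
    obtain ⟨m, hm⟩ := h1
    apply h2.2
    refine ⟨k * m, ?_⟩
    rw [abs_mul, abs_mul] at hk
    have hbpos : (0 : K) < |b| := abs_pos.mpr hb
    push_cast
    have step : |b| * |d| ≤ (k : K) * ((m : K) * |b|) * |c| := by
      calc |b| * |d| ≤ (k : K) * (|a| * |c|) := hk
        _ ≤ (k : K) * (((m : K) * |b|) * |c|) := by
            apply mul_le_mul_of_nonneg_left _ (by positivity)
            exact mul_le_mul_of_nonneg_right hm (abs_nonneg _)
        _ = (k : K) * ((m : K) * |b|) * |c| := by ring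
    have := (mul_le_mul_iff_right₀ hbpos).mp (by nlinarith [abs_nonneg c, abs_nonneg d] :
      |b| * |d| ≤ |b| * ((k : K) * (m : K) * |c|))
    exact this.trans_eq (by ring)

lemma domLT_inv (ha : a ≠ 0) (h : domLT a b) : domLT b⁻¹ a⁻¹ := by
  have key := not_domLE_iff.mp h.2
  have hb : b ≠ 0 := ne_zero_of_domLT h
  have hapos : (0 : K) < |a| := abs_pos.mpr ha
  have hbpos : (0 : K) < |b| := abs_pos.mpr hb
  constructor
  · refine ⟨1, ?_⟩
    rw [abs_inv, abs_inv]
    have h1 : |a| < |b| := by simpa using key 1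
    have := inv_anti₀ hapos h1.le
    simpa using this
  · rintro ⟨k, hk⟩
    rw [abs_inv, abs_inv] at hk
    have hcl := key k
    have hk' : |b| ≤ (k : K) * |a| := by
      have h1 : |a|⁻¹ * (|a| * |b|) ≤ ((k : K) * |b|⁻¹) * (|a| * |b|) :=
        mul_le_mul_of_nonneg_right hk (by positivity)
      have e1 : |a|⁻¹ * (|a| * |b|) = |b| := by field_simp
      have e2 : ((k : K) * |b|⁻¹) * (|a| * |b|) = (k : K) * |a| := by
        field_simp
      rw [e1, e2] at h1
      exact h1
    exact absurd hk' hcl.not_ge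

lemma domLT_of_abs_eq (h : |a| = |a'|) (h2 : domLT a c) : domLT a' c := by
  unfold domLT domLE at *
  rw [← h]
  exact h2

lemma domSim.ne_left (h : domSim a b) : a ≠ 0 := by
  intro ha
  exact h.2 (ha ▸ domLE_zero_left)

lemma domEq_of_domSim (h : domSim a b) : domEq a b := by
  have key := not_domLE_iff.mp h.2
  have h2 : 2 * |a - b| < |a| := by simpa using key 2
  constructor
  · refine ⟨2, ?_⟩
    have : |a| ≤ |b| + |a - b| := by
      calc |a| = |b + (a - b)| := by ring_nf
        _ ≤ |b| + |a - b| := abs_add_le _ _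
    push_cast
    nlinarith [abs_nonneg (a - b), abs_nonneg b]
  · refine ⟨2, ?_⟩
    have : |b| ≤ |a| + |a - b| := by
      calc |b| = |a - (a - b)| := by ring_nf
        _ ≤ |a| + |a - b| := abs_sub _ _
    push_cast
    nlinarith [abs_nonneg (a - b), abs_nonneg a]

lemma domSim.ne_right (h : domSim a b) : b ≠ 0 := by
  intro hb
  have := (domEq_of_domSim h).1
  exact h.ne_left (eq_zero_of_domLE_zero (hb ▸ this))

lemma domSim_refl (h : a ≠ 0) : domSim a a := by
  unfold domSim
  simpa using zero_domLT h

lemma domSim.symm (h : domSim a b) : domSim b a := by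
  have heq := domEq_of_domSim h
  have h1 : domLT (a - b) b := domLT_of_domLT_of_domLE h heq.1
  exact domLT_of_abs_eq (by rw [abs_sub_comm]) h1

lemma domSim.trans (h1 : domSim a b) (h2 : domSim b c) : domSim a c := by
  have heq := domEq_of_domSim h1
  have hbc : domLT (b - c) a := domLT_of_domLT_of_domLE h2 heq.2
  have : domLT ((a - b) + (b - c)) a := domLT_add h1 hbc
  exact domLT_of_abs_eq (by ring_nf) this

lemma domSim_add_of_domLT (h : domLT c a) : domSim (a + c) a := by
  have ha : a ≠ 0 := ne_zero_of_domLT h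
  have key := not_domLE_iff.mp h.2
  have h2 : 2 * |c| < |a| := by simpa using key 2
  have hle : domLE a (a + c) := by
    refine ⟨2, ?_⟩
    have : |a| ≤ |a + c| + |c| := by
      calc |a| = |(a + c) - c| := by ring_nf
        _ ≤ |a + c| + |c| := abs_sub _ _
    push_cast
    nlinarith [abs_nonneg c, abs_nonneg (a + c)]
  have : domLT c (a + c) := domLT_of_domLT_of_domLE h hle
  exact domLT_of_abs_eq (by ring_nf) this

lemma domSim_mul (h1 : domSim a b) (h2 : domSim c d) : domSim (a * c) (b * d) := by
  have heq1 := domEq_of_domSim h1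
  have ha := h1.ne_left
  have hc := h2.ne_left
  have t1 : domLT ((a - b) * c) (a * c) := domLT_mul_right h1 hc
  have t2 : domLT (b * (c - d)) (a * c) := domLT_mul_of_domLE_of_domLT heq1.2 h2 ha
  have hsum := domLT_add t1 t2
  exact domLT_of_abs_eq (congrArg abs (by ring)) hsum


lemma domLT_neg_right_iff : domLT a (-b) ↔ domLT a b := by
  simp [domLT, domLE, abs_neg]

lemma domLT_neg_left_iff : domLT (-a) b ↔ domLT a b := by
  simp [domLT, domLE, abs_neg]

end DomLemmas

namespace OmegaFieldStruct

variable {O : Type*} [Field O] [LinearOrder O] [IsStrictOrderedRing O] (Ω : OmegaFieldStruct O)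

lemma D_zero : Ω.D 0 = 0 := by
  have h := Ω.D_add 0 0
  simp only [add_zero] at h
  linarith

lemma D_one : Ω.D 1 = 0 := by
  have h := Ω.D_mul 1 1
  simp only [mul_one, one_mul] at h
  linarith

lemma D_neg (a : O) : Ω.D (-a) = -Ω.D a := by
  have h := Ω.D_add a (-a)
  rw [add_neg_cancel, Ω.D_zero] at h
  linarith

lemma D_sub (a b : O) : Ω.D (a - b) = Ω.D a - Ω.D b := by
  rw [sub_eq_add_neg, Ω.D_add, Ω.D_neg, sub_eq_add_neg]

lemma D_natMul (n : ℕ) (a : O) : Ω.D ((n : O) * a) = (n : O) * Ω.D a := by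
  rw [show ((n : ℕ) : O) = Ω.emb ((n : ℕ) : ℝ) by rw [map_natCast], Ω.D_mul, Ω.D_emb]
  ring

lemma D_inv (u : O) (hu : u ≠ 0) : Ω.D u⁻¹ = -(Ω.D u / u ^ 2) := by
  have h := Ω.D_mul u u⁻¹
  rw [mul_inv_cancel₀ hu, Ω.D_one] at h
  have h2 : u * Ω.D u⁻¹ = -(Ω.D u * u⁻¹) := by linarith
  calc Ω.D u⁻¹ = u⁻¹ * (u * Ω.D u⁻¹) := by rw [← mul_assoc, inv_mul_cancel₀ hu, one_mul]
    _ = u⁻¹ * (-(Ω.D u * u⁻¹)) := by rw [h2]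
    _ = -(Ω.D u / u ^ 2) := by
        field_simp

lemma emb_mono : Monotone Ω.emb := by
  intro r s hrs
  have h0 : (0 : O) ≤ Ω.emb (s - r) := by
    rw [show s - r = Real.sqrt (s - r) ^ 2 from (Real.sq_sqrt (by linarith)).symm, map_pow]
    positivity
  rw [map_sub] at h0
  linarith

lemma T_pos : 0 < Ω.T := by
  have h := Ω.T_gt_reals 0
  rwa [map_zero] at h

lemma one_domLT_T : domLT (1 : O) Ω.T := by
  constructor
  · refine ⟨1, ?_⟩
    have h1 : (1 : O) < Ω.T := by
      have := Ω.T_gt_reals 1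
      rwa [map_one] at this
    rw [abs_one, abs_of_pos Ω.T_pos]
    push_cast
    linarith
  · rintro ⟨n, hn⟩
    rw [abs_one, abs_of_pos Ω.T_pos, mul_one] at hn
    have h2 : Ω.emb n < Ω.T := Ω.T_gt_reals n
    rw [map_natCast] at h2
    exact absurd hn h2.not_ge

lemma D_domLT_pos {a b : O} (hbpos : 0 < b) (hb1 : domLT 1 b) (hab : domLT a b) :
    domLT (Ω.D a) (Ω.D b) := by
  have key : ∀ n : ℕ, (n : O) * |a| < b := by
    intro n
    have h := not_domLE_iff.mp hab.2 n
    rwa [abs_of_pos hbpos] at h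
  have hgt : gtReals Ω.emb b := by
    intro r
    have h1 : Ω.emb r ≤ Ω.emb ((⌈r⌉₊ : ℕ) : ℝ) := Ω.emb_mono (Nat.le_ceil r)
    rw [map_natCast] at h1
    have h2 : ((⌈r⌉₊ : ℕ) : O) < b := by
      have h3 := not_domLE_iff.mp hb1.2 ⌈r⌉₊
      rw [abs_of_pos hbpos] at h3
      simpa using h3
    exact h1.trans_lt h2
  have hDba : ∀ n : ℕ, (n : O) * |Ω.D a| < Ω.D b := by
    intro n
    have h2n : (n : O) * |a| < b / 2 := by
      have h := key (2 * n)
      push_cast at h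
      linarith
    have hside : ∀ c : O, |c| = |a| → 0 < Ω.D b - (n : O) * Ω.D c := by
      intro c hc
      have hg : gtReals Ω.emb (b - (n : O) * c) := by
        intro r
        have hr2 : Ω.emb r < b / 2 := by
          have h4 := hgt (2 * r)
          have e : Ω.emb (2 * r) = 2 * Ω.emb r := by
            rw [map_mul, map_ofNat]
          rw [e] at h4
          linarith
        have hc' : (n : O) * c ≤ (n : O) * |a| := by
          rw [← hc]
          exact mul_le_mul_of_nonneg_left (le_abs_self c) (by positivity)
        linarith
      have h5 := Ω.D_pos_of_gt_reals _ hg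
      rwa [Ω.D_sub, Ω.D_natMul] at h5
    have h1 := hside a rfl
    have h2 := hside (-a) (abs_neg a)
    rw [Ω.D_neg] at h2
    rcases abs_cases (Ω.D a) with ⟨he, _⟩ | ⟨he, _⟩ <;> rw [he] <;> nlinarith
  have hDbpos : 0 < Ω.D b := Ω.D_pos_of_gt_reals b hgt
  constructor
  · refine ⟨1, ?_⟩
    have h := hDba 1
    rw [abs_of_pos hDbpos]
    push_cast at h ⊢
    linarith
  · rintro ⟨k, hk⟩
    have h := hDba k
    rw [abs_of_pos hDbpos] at hk
    exact absurd hk h.not_ge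

lemma D_domLT {a b : O} (hb1 : domLT 1 b) (hab : domLT a b) : domLT (Ω.D a) (Ω.D b) := by
  rcases lt_trichotomy b 0 with hb | hb | hb
  · have h1 := Ω.D_domLT_pos (show (0 : O) < -b by linarith)
      (domLT_neg_right_iff.mpr hb1) (domLT_neg_right_iff.mpr hab)
    rw [Ω.D_neg] at h1
    exact domLT_neg_right_iff.mp h1
  · exact absurd hb (ne_zero_of_domLT hab)
  · exact Ω.D_domLT_pos hb hb1 hab

lemma logderiv_domLT {u : O} (hu : domLT (1 / Ω.T) u) : domLT (Ω.D u / u) u := by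
  have hTne : Ω.T ≠ 0 := Ω.T_pos.ne'
  have hu0 : u ≠ 0 := by
    intro h
    subst h
    exact one_div_ne_zero hTne (eq_zero_of_domLE_zero hu.1)
  have hinv : domLT u⁻¹ Ω.T := by
    have h := domLT_inv (one_div_ne_zero hTne) hu
    rwa [one_div, inv_inv] at h
  have hD1 : domLT (Ω.D u⁻¹) 1 := by
    have h := Ω.D_domLT Ω.one_domLT_T hinv
    rwa [Ω.D_T] at h
  have h2 : domLT (Ω.D u / u ^ 2) 1 := by
    rw [Ω.D_inv u hu0] at hD1
    exact domLT_neg_left_iff.mp hD1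
  have h3 := domLT_mul_right h2 hu0
  have e : Ω.D u / u ^ 2 * u = Ω.D u / u := by
    field_simp
  rwa [e, one_mul] at h3

end OmegaFieldStruct

/-- Interface for the composition of omega-series by elements `x > ℝ` of a
confluent field of transseries `U`: for each such `x`, `f ↦ comp f x` is the
unique strongly `ℝ`-linear ordered field embedding with `comp T x = x` and
`comp (exp γ) x = expU (comp γ x)`.  Confluence of `U` is what guarantees the
existence of this composition, which we take as primitive data. -/
structure CompStruct (O U : Type*) [Field O] [LinearOrder O] [IsStrictOrderedRing O] [Field U] [LinearOrder U] [IsStrictOrderedRing U]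
    (Ω : OmegaFieldStruct O) where
  /-- the embedding of the real numbers into `U` -/
  embU : ℝ →+* U
  /-- the exponential of `U` -/
  expU : U → U
  /-- the logarithm of `U` (meaningful on positive elements) -/
  logU : U → U
  /-- the composition `f ∘ x` of an omega-series `f` with `x ∈ U`,
  meaningful for `x > ℝ` -/
  comp : O → U → U
  expU_add : ∀ a b : U, expU (a + b) = expU a * expU b
  expU_pos : ∀ a : U, 0 < expU a
  expU_strictMono : StrictMono expU
  logU_expU : ∀ a : U, logU (expU a) = a
  expU_logU : ∀ a : U, 0 < a → expU (logU a) = a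
  comp_add : ∀ (f g : O) (x : U), gtReals embU x →
    comp (f + g) x = comp f x + comp g x
  comp_mul : ∀ (f g : O) (x : U), gtReals embU x →
    comp (f * g) x = comp f x * comp g x
  comp_emb : ∀ (r : ℝ) (x : U), gtReals embU x → comp (Ω.emb r) x = embU r
  comp_T : ∀ x : U, gtReals embU x → comp Ω.T x = x
  comp_exp : ∀ (f : O) (x : U), gtReals embU x →
    comp (Ω.exp f) x = expU (comp f x)
  comp_log : ∀ (f : O) (x : U), gtReals embU x → 0 < f →
    comp (Ω.log f) x = logU (comp f x)
  /-- right composition is an ordered field embedding -/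
  comp_strictMono : ∀ x : U, gtReals embU x → StrictMono fun f : O => comp f x

/-- **Iterated derivatives, rapidly varying case.** Let `f ∈ 𝕆ω` with
`f ≉ T^k` for every `k ∈ ℕ`.  If `f^† ≻ 1/T` (where `f^† = f'/f`), then
`f⁽ⁿ⁺¹⁾ ∼ (f^†)^{n+1}·f` for all `n ∈ ℕ`. -/
theorem statement10 {O : Type*} [Field O] [LinearOrder O] [IsStrictOrderedRing O]
    (Ω : OmegaFieldStruct O) (f : O)
    (hf : ∀ k : ℕ, ¬ domEq f (Ω.T ^ k))
    (hdag : domLT (1 / Ω.T) (Ω.D f / f)) (n : ℕ) :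
    domSim ((Ω.D)^[n + 1] f) ((Ω.D f / f) ^ (n + 1) * f) := by
  set g := Ω.D f / f with hg
  have hTne : Ω.T ≠ 0 := Ω.T_pos.ne'
  have hg0 : g ≠ 0 := by
    intro h
    rw [h] at hdag
    exact one_div_ne_zero hTne (eq_zero_of_domLE_zero hdag.1)
  have hf0 : f ≠ 0 := by
    intro h
    apply hg0
    rw [hg, h, div_zero]
  have hDf : Ω.D f = g * f := (div_mul_cancel₀ (Ω.D f) hf0).symm
  have main : ∀ m : ℕ, ((Ω.D)^[m] f ≠ 0) ∧
      domSim (Ω.D ((Ω.D)^[m] f) / ((Ω.D)^[m] f)) g ∧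
      domSim ((Ω.D)^[m + 1] f) (g ^ (m + 1) * f) := by
    intro m
    induction m with
    | zero =>
      refine ⟨by simpa using hf0, ?_, ?_⟩
      · rw [Function.iterate_zero_apply, ← hg]
        exact domSim_refl hg0
      · have h1 : (Ω.D)^[1] f = g * f := by
          rw [Function.iterate_one]
          exact hDf
        rw [h1, pow_one]
        exact domSim_refl (mul_ne_zero hg0 hf0)
    | succ m ih =>
      obtain ⟨hm0, hu, hmain⟩ := ih
      set h := (Ω.D)^[m] f with hh
      set u := Ω.D h / h with hudef
      have hDh : Ω.D h = u * h := (div_mul_cancel₀ (Ω.D h) hm0).symm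
      have hh1 : (Ω.D)^[m + 1] f = u * h := by
        rw [Function.iterate_succ_apply']
        exact hDh
      have hm1 : (Ω.D)^[m + 1] f ≠ 0 := hmain.ne_left
      have hu0 : u ≠ 0 := hu.ne_left
      have huT : domLT (1 / Ω.T) u :=
        domLT_of_domLT_of_domLE hdag (domEq_of_domSim hu).2
      have hut : domLT (Ω.D u / u) u := Ω.logderiv_domLT huT
      have hcompute : Ω.D ((Ω.D)^[m + 1] f) / ((Ω.D)^[m + 1] f) = u + Ω.D u / u := by
        rw [hh1, Ω.D_mul, hDh]
        field_simp
        ring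
      have hsim1 : domSim (u + Ω.D u / u) g := (domSim_add_of_domLT hut).trans hu
      refine ⟨hm1, ?_, ?_⟩
      · rw [hcompute]
        exact hsim1
      · have hstep : (Ω.D)^[m + 1 + 1] f = (u + Ω.D u / u) * ((Ω.D)^[m + 1] f) := by
          rw [Function.iterate_succ_apply' Ω.D (m + 1)]
          exact (div_eq_iff hm1).mp hcompute
        rw [hstep]
        have hmul := domSim_mul hsim1 hmain
        have e : g ^ (m + 1 + 1) * f = g * (g ^ (m + 1) * f) := by ring
        rw [e]
        exact hmul
  exact (main n).2.2
end

section
/- Let 𝕆ω be a field of omega-series in a log-atomic monomial T, and write f^† = f'/f. Let f ∈ 𝕆ω be such that f ≉ T^k for every k ∈ ℕ. If f^† ≼ 1/T, then there is ℓ ∈ ℕ such that for all n ≥ ℓ: f^{(n+1)} ≍ f^{(ℓ)}/T^{n−ℓ+1} ≼ f/T^{n+1}. -/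
namespace Stmt11Aux

section Dom
variable {K : Type*} [Field K] [LinearOrder K] [IsStrictOrderedRing K]

theorem domLE_refl (a : K) : domLE a a := ⟨1, by simp⟩

theorem domLE_trans {a b c : K} (h1 : domLE a b) (h2 : domLE b c) : domLE a c := by
  obtain ⟨n, hn⟩ := h1; obtain ⟨m, hm⟩ := h2
  refine ⟨n * m, ?_⟩
  push_cast
  nlinarith [abs_nonneg a, abs_nonneg b, abs_nonneg c,
    (by positivity : (0:K) ≤ (n:K)), (by positivity : (0:K) ≤ (m:K))]

theorem domEq_refl (a : K) : domEq a a := ⟨domLE_refl a, domLE_refl a⟩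

theorem domEq_symm {a b : K} (h : domEq a b) : domEq b a := ⟨h.2, h.1⟩

theorem domEq_trans {a b c : K} (h1 : domEq a b) (h2 : domEq b c) : domEq a c :=
  ⟨domLE_trans h1.1 h2.1, domLE_trans h2.2 h1.2⟩

theorem domLE_div_pos {a b t : K} (ht : 0 < t) (h : domLE a b) : domLE (a / t) (b / t) := by
  obtain ⟨n, hn⟩ := h
  refine ⟨n, ?_⟩
  rw [abs_div, abs_div, abs_of_pos ht, div_le_iff₀ ht]
  calc |a| ≤ (n:K) * |b| := hn
  _ = (n:K) * (|b|/t) * t := by field_simp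

theorem domEq_div_pos {a b t : K} (ht : 0 < t) (h : domEq a b) : domEq (a / t) (b / t) :=
  ⟨domLE_div_pos ht h.1, domLE_div_pos ht h.2⟩

theorem domLE_neg_left {a b : K} : domLE (-a) b ↔ domLE a b := by
  simp [domLE, abs_neg]

theorem domEq_neg_left {a b : K} : domEq (-a) b ↔ domEq a b := by
  simp [domEq, domLE, abs_neg]

theorem domEq_of_div_one {a t : K} (ht : 0 < t) (h : domEq (a / t) 1) : domEq a t := by
  obtain ⟨⟨n, hn⟩, ⟨m, hm⟩⟩ := h
  rw [abs_div, abs_of_pos ht, abs_one, div_le_iff₀ ht] at hn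
  rw [abs_one, abs_div, abs_of_pos ht] at hm
  constructor
  · exact ⟨n, by rw [abs_of_pos ht]; linarith⟩
  · refine ⟨m, ?_⟩
    rw [abs_of_pos ht]
    rw [← mul_div_assoc] at hm
    exact (one_le_div ht).mp hm

end Dom

section Omega
variable {O : Type*} [Field O] [LinearOrder O] [IsStrictOrderedRing O] (Ω : OmegaFieldStruct O)

theorem emb_pos_of_pos {r : ℝ} (hr : 0 < r) : 0 < Ω.emb r := by
  have h1 : Ω.emb r = (Ω.emb (Real.sqrt r)) ^ 2 := by
    rw [← map_pow, Real.sq_sqrt hr.le]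
  have h2 : Ω.emb r ≠ 0 := fun h => hr.ne' (Ω.emb.injective (by simpa using h))
  rw [h1] at h2 ⊢
  exact (sq_nonneg _).lt_of_ne' h2

theorem emb_strictMono : StrictMono Ω.emb := by
  intro r s hrs
  have : 0 < Ω.emb (s - r) := emb_pos_of_pos Ω (by linarith)
  rw [map_sub] at this
  linarith

theorem emb_abs (r : ℝ) : |Ω.emb r| = Ω.emb |r| := by
  rcases le_total 0 r with h | h
  · rw [abs_of_nonneg h, abs_of_nonneg]
    simpa using (emb_strictMono Ω).monotone h
  · rw [abs_of_nonpos h, abs_of_nonpos, ← map_neg]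
    simpa using (emb_strictMono Ω).monotone h

theorem emb_le_ceil (r : ℝ) : Ω.emb r ≤ ((⌈r⌉₊ : ℕ) : O) := by
  rw [← map_natCast Ω.emb]
  exact (emb_strictMono Ω).monotone (Nat.le_ceil r)

theorem T_pos : 0 < Ω.T := by simpa using Ω.T_gt_reals 0

theorem gtReals_natCast_lt {x : O} (hx : gtReals Ω.emb x) (n : ℕ) : (n : O) < x := by
  rw [← map_natCast Ω.emb]; exact hx n

theorem gtReals_pos {x : O} (hx : gtReals Ω.emb x) : 0 < x := by
  simpa using gtReals_natCast_lt Ω hx 0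

theorem exp_zero : Ω.exp 0 = 1 := by
  have h : Ω.exp 0 * Ω.exp 0 = Ω.exp 0 := by rw [← Ω.exp_add]; norm_num
  have h2 := Ω.exp_pos 0
  nlinarith

theorem exp_injective : Function.Injective Ω.exp := Ω.exp_strictMono.injective

theorem log_one : Ω.log 1 = 0 := by rw [← exp_zero Ω, Ω.log_exp]

theorem log_mul {a b : O} (ha : 0 < a) (hb : 0 < b) :
    Ω.log (a * b) = Ω.log a + Ω.log b := by
  apply exp_injective Ω
  rw [Ω.exp_add, Ω.exp_log _ ha, Ω.exp_log _ hb, Ω.exp_log _ (by positivity)]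

theorem log_inv {a : O} (ha : 0 < a) : Ω.log a⁻¹ = -Ω.log a := by
  have h := log_mul Ω ha (by positivity : (0:O) < a⁻¹)
  rw [mul_inv_cancel₀ ha.ne', log_one] at h
  linarith

theorem log_mono {a b : O} (ha : 0 < a) (h : a ≤ b) : Ω.log a ≤ Ω.log b := by
  by_contra hcon
  push_neg at hcon
  have := Ω.exp_strictMono hcon
  rw [Ω.exp_log _ ha, Ω.exp_log _ (lt_of_lt_of_le ha h)] at this
  linarith

theorem logT_gtReals : gtReals Ω.emb (Ω.log Ω.T) := by
  intro r
  have h : Ω.exp (Ω.emb r) < Ω.exp (Ω.log Ω.T) := by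
    rw [Ω.exp_log _ (T_pos Ω), Ω.exp_emb]
    exact Ω.T_gt_reals _
  exact Ω.exp_strictMono.lt_iff_lt.mp h

theorem D_zero : Ω.D 0 = 0 := by
  have h := Ω.D_add 0 0
  norm_num at h
  linarith

theorem D_neg (a : O) : Ω.D (-a) = -Ω.D a := by
  have h := Ω.D_add a (-a)
  norm_num [D_zero] at h
  linarith

theorem D_nsmul (n : ℕ) (a : O) : Ω.D ((n : O) * a) = (n : O) * Ω.D a := by
  rw [← map_natCast Ω.emb, Ω.D_mul, Ω.D_emb, zero_mul, zero_add]

theorem D_log {x : O} (hx : 0 < x) : Ω.D (Ω.log x) = Ω.D x / x := by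
  have h1 : x = Ω.exp (Ω.log x) := (Ω.exp_log x hx).symm
  have h2 : Ω.D x = x * Ω.D (Ω.log x) := by
    conv_lhs => rw [h1]
    rw [Ω.D_exp, ← h1]
  rw [h2]
  field_simp

theorem D_logT : Ω.D (Ω.log Ω.T) = 1 / Ω.T := by
  rw [D_log Ω (T_pos Ω), Ω.D_T]

theorem D_inv {x : O} (hx : x ≠ 0) : Ω.D x⁻¹ = -Ω.D x / x ^ 2 := by
  have h : Ω.D (x * x⁻¹) = 0 := by rw [mul_inv_cancel₀ hx, ← map_one Ω.emb, Ω.D_emb]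
  rw [Ω.D_mul] at h
  field_simp at h ⊢
  linarith

end Omega

section Small
variable {O : Type*} [Field O] [LinearOrder O] [IsStrictOrderedRing O] (Ω : OmegaFieldStruct O)

/-- `x` is smaller in absolute value than every positive real. -/
def small (x : O) : Prop := ∀ r : ℝ, 0 < r → |x| ≤ Ω.emb r

variable {Ω}

theorem small_add {x y : O} (hx : small Ω x) (hy : small Ω y) : small Ω (x + y) := by
  intro r hr
  have h1 := hx (r/2) (by linarith)
  have h2 := hy (r/2) (by linarith)
  have h3 : Ω.emb (r/2) + Ω.emb (r/2) = Ω.emb r := by rw [← map_add]; norm_num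
  calc |x + y| ≤ |x| + |y| := abs_add_le _ _
  _ ≤ Ω.emb r := by linarith

theorem small_mul_bdd {x y : O} (hx : small Ω x) {M : ℝ} (hM : 0 < M)
    (hy : |y| ≤ Ω.emb M) : small Ω (x * y) := by
  intro r hr
  have h1 := hx (r / M) (by positivity)
  have h2 : Ω.emb (r / M) * Ω.emb M = Ω.emb r := by rw [← map_mul]; congr 1; field_simp
  calc |x * y| = |x| * |y| := abs_mul _ _
  _ ≤ Ω.emb (r / M) * Ω.emb M := by
        apply mul_le_mul h1 hy (abs_nonneg _)
        exact (emb_pos_of_pos Ω (by positivity)).le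
  _ = Ω.emb r := h2

theorem small_lt_gtReals {x b : O} (hx : small Ω x) (hb : gtReals Ω.emb b) (n : ℕ) :
    (n : O) * |x| < b := by
  have h1 := hx 1 one_pos
  rw [map_one] at h1
  have h2 : (n : O) * |x| ≤ (n : O) := by
    nlinarith [abs_nonneg x, (by positivity : (0:O) ≤ (n:O))]
  exact lt_of_le_of_lt h2 (gtReals_natCast_lt Ω hb n)

/-- H-field lemma: if `|a|` is infinitely smaller than `b > ℝ` then the same
holds for the derivatives. -/
theorem lem1 {a b : O} (hb : gtReals Ω.emb b) (h : ∀ n : ℕ, (n : O) * |a| < b)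
    (n : ℕ) : (n : O) * |Ω.D a| < Ω.D b := by
  have h2 : (n : O) * |a| < b / 2 := by
    have := h (2 * n); push_cast at this; linarith
  have hna : |(n : O) * a| < b / 2 := by
    rw [abs_mul, Nat.abs_cast]; exact h2
  have habs := abs_lt.mp hna
  have hgt : ∀ r : ℝ, Ω.emb r < b / 2 := by
    intro r
    have hb2 : Ω.emb (2 * r) < b := hb _
    have h2r : Ω.emb (2 * r) = 2 * Ω.emb r := by
      rw [map_mul, map_ofNat]
    linarith
  have hgt1 : gtReals Ω.emb (b + (n : O) * a) := fun r => by
    have := hgt r; linarith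
  have hgt2 : gtReals Ω.emb (b - (n : O) * a) := fun r => by
    have := hgt r; linarith
  have p1 := Ω.D_pos_of_gt_reals _ hgt1
  have p2 := Ω.D_pos_of_gt_reals _ hgt2
  rw [Ω.D_add, D_nsmul] at p1
  rw [sub_eq_add_neg, Ω.D_add, ← mul_neg, D_nsmul, D_neg] at p2
  rcases abs_cases (Ω.D a) with ⟨he, _⟩ | ⟨he, _⟩ <;> rw [he] <;> nlinarith

theorem small_TD {x : O} (hx : small Ω x) : small Ω (Ω.T * Ω.D x) := by
  intro r hr
  obtain ⟨n, hn⟩ := exists_nat_gt (1 / r)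
  have hn0 : (0:ℝ) < n := lt_trans (by positivity) hn
  have hn0' : 0 < n := by exact_mod_cast hn0
  have h1 : ((n : O)) * |Ω.D x| < Ω.D (Ω.log Ω.T) :=
    lem1 (logT_gtReals Ω) (small_lt_gtReals hx (logT_gtReals Ω)) n
  rw [D_logT] at h1
  have hT := T_pos Ω
  have hnO : (0:O) < (n:O) := by exact_mod_cast hn0'
  have h2 : Ω.T * |Ω.D x| < 1 / (n : O) := by
    rw [lt_div_iff₀ hnO]
    have h5 := mul_lt_mul_of_pos_left h1 hT
    have hTT : Ω.T * (1 / Ω.T) = 1 := by field_simp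
    nlinarith [h5]
  have h3 : (1 : O) / (n : O) ≤ Ω.emb r := by
    have e1 : (1 : O) / (n : O) = Ω.emb (1 / n) := by
      rw [map_div₀, map_one, map_natCast]
    rw [e1]
    apply (emb_strictMono Ω).monotone
    rw [div_le_iff₀ hn0]
    have h6 := mul_lt_mul_of_pos_left hn hr
    have h7 : r * (1 / r) = 1 := by field_simp
    nlinarith [h6]
  calc |Ω.T * Ω.D x| = Ω.T * |Ω.D x| := by rw [abs_mul, abs_of_pos hT]
  _ ≤ Ω.emb r := le_of_lt (lt_of_lt_of_le h2 h3)

/-- standard part of a bounded element -/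
theorem exists_st {x : O} (hx : ∃ n : ℕ, |x| ≤ (n : O)) :
    ∃ c : ℝ, small Ω (x - Ω.emb c) := by
  obtain ⟨n, hn⟩ := hx
  have habs := abs_le.mp hn
  set S : Set ℝ := {r | Ω.emb r ≤ x} with hS
  have hne : (-(n : ℝ)) ∈ S := by
    simp only [hS, Set.mem_setOf_eq, map_neg, map_natCast]
    linarith
  have hbdd : BddAbove S := by
    refine ⟨n, fun r hr => ?_⟩
    simp only [hS, Set.mem_setOf_eq] at hr
    have : Ω.emb r ≤ Ω.emb n := by rw [map_natCast]; linarith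
    exact le_of_not_gt fun hc => absurd (emb_strictMono Ω hc) (not_lt.mpr this)
  refine ⟨sSup S, fun r hr => ?_⟩
  have hub : x ≤ Ω.emb (sSup S + r) := by
    by_contra hcon
    push_neg at hcon
    have hmem : sSup S + r ∈ S := le_of_lt hcon
    have := le_csSup hbdd hmem
    linarith
  have hlb : Ω.emb (sSup S - r) ≤ x := by
    obtain ⟨s, hs, hs2⟩ := exists_lt_of_lt_csSup ⟨_, hne⟩
      (by linarith : sSup S - r < sSup S)
    exact le_trans ((emb_strictMono Ω).monotone hs2.le) hs
  rw [abs_le]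
  rw [map_add] at hub
  rw [map_sub] at hlb
  constructor <;> linarith

end Small

section Std
variable {O : Type*} [Field O] [LinearOrder O] [IsStrictOrderedRing O] (Ω : OmegaFieldStruct O)

/-- `h` is nonzero with `T * h† = c + (infinitesimal)`. -/
def Std (h : O) (c : ℝ) : Prop :=
  h ≠ 0 ∧ small Ω (Ω.T * (Ω.D h / h) - Ω.emb c)

variable {Ω}

theorem std_D_ne {h : O} {c : ℝ} (hs : Std Ω h c) (hc : c ≠ 0) : Ω.D h ≠ 0 := by
  intro h0
  have h1 := hs.2 (|c| / 2) (by positivity)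
  rw [h0, zero_div, mul_zero, zero_sub, abs_neg, emb_abs] at h1
  have h2 : Ω.emb (|c| / 2) < Ω.emb |c| :=
    emb_strictMono Ω (by have := abs_pos.mpr hc; linarith)
  linarith

set_option maxHeartbeats 2000000 in
theorem std_step {h : O} {c : ℝ} (hs : Std Ω h c) (hc : c ≠ 0) :
    Std Ω (Ω.D h) (c - 1) ∧ domEq (Ω.D h) (h / Ω.T) := by
  obtain ⟨hh, hsm⟩ := hs
  have hT := T_pos Ω
  set u := Ω.D h / h with hu_def
  have hDh : Ω.D h = h * u := by rw [hu_def]; field_simp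
  have hDh_ne : Ω.D h ≠ 0 := std_D_ne ⟨hh, hsm⟩ hc
  have hu : u ≠ 0 := by
    intro h0; rw [hDh, h0, mul_zero] at hDh_ne; exact hDh_ne rfl
  set δ := Ω.T * u - Ω.emb c with hδ
  have hsδ : small Ω δ := hsm
  have hTu : Ω.T * u = Ω.emb c + δ := by rw [hδ]; ring
  have hc2 : (0:ℝ) < |c| / 2 := by positivity
  have hδ1 := hsδ (|c| / 2) hc2
  have hδ2 := hsδ |c| (abs_pos.mpr hc)
  have habsc : |Ω.emb c| = Ω.emb |c| := emb_abs Ω c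
  have e_half : Ω.emb (|c| / 2) + Ω.emb (|c| / 2) = Ω.emb |c| := by
    rw [← map_add]; norm_num
  have e_two : Ω.emb (2 * |c|) = Ω.emb |c| + Ω.emb |c| := by
    rw [← map_add]; ring_nf
  have hlb : Ω.emb (|c| / 2) ≤ |Ω.T * u| := by
    rw [hTu]
    rcases abs_cases (Ω.emb c + δ) with ⟨he, _⟩ | ⟨he, _⟩ <;>
      rcases abs_cases (Ω.emb c) with ⟨he2, _⟩ | ⟨he2, _⟩ <;>
      rcases abs_le.mp hδ1 with ⟨hd1, hd2⟩ <;> rw [he] <;> linarith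
  have hub : |Ω.T * u| ≤ Ω.emb (2 * |c|) := by
    rw [hTu]
    rcases abs_cases (Ω.emb c + δ) with ⟨he, _⟩ | ⟨he, _⟩ <;>
      rcases abs_cases (Ω.emb c) with ⟨he2, _⟩ | ⟨he2, _⟩ <;>
      rcases abs_le.mp hδ2 with ⟨hd1, hd2⟩ <;> rw [he] <;> linarith
  have hepos := emb_pos_of_pos Ω hc2
  have habs_Dh : |Ω.D h| * Ω.T = |h| * |Ω.T * u| := by
    rw [hDh, abs_mul, abs_mul, abs_of_pos hT]; ring
  have habs_hT : |h / Ω.T| = |h| / Ω.T := by rw [abs_div, abs_of_pos hT]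
  have hM : Ω.emb (|c| / 2) * Ω.emb (2 / |c|) = 1 := by
    rw [← map_mul, show |c| / 2 * (2 / |c|) = 1 by
      field_simp, map_one]
  have hMpos : (0:O) < Ω.emb (2 / |c|) := emb_pos_of_pos Ω (by positivity)
  have hdome : domEq (Ω.D h) (h / Ω.T) := by
    constructor
    · refine ⟨⌈2 * |c|⌉₊, ?_⟩
      have hN := le_trans hub (emb_le_ceil Ω (2 * |c|))
      rw [habs_hT, mul_div_assoc', le_div_iff₀ hT]
      nlinarith [abs_nonneg h, habs_Dh]
    · refine ⟨⌈2 / |c|⌉₊, ?_⟩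
      rw [habs_hT, div_le_iff₀ hT]
      have s1 : |h| * Ω.emb (|c| / 2) ≤ |Ω.D h| * Ω.T := by
        nlinarith [abs_nonneg h, habs_Dh, hlb]
      calc |h| = |h| * Ω.emb (|c| / 2) * Ω.emb (2 / |c|) := by
            rw [mul_assoc, hM, mul_one]
      _ ≤ (|Ω.D h| * Ω.T) * Ω.emb (2 / |c|) :=
            mul_le_mul_of_nonneg_right s1 hMpos.le
      _ ≤ (|Ω.D h| * Ω.T) * (⌈2 / |c|⌉₊ : O) := by
            apply mul_le_mul_of_nonneg_left (emb_le_ceil Ω _)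
            positivity
      _ = (⌈2 / |c|⌉₊ : O) * |Ω.D h| * Ω.T := by ring
  have hDu : Ω.D u = (Ω.D δ - u) / Ω.T := by
    have h1 : Ω.D (Ω.T * u) = Ω.D δ := by
      conv_lhs => rw [hTu]
      rw [Ω.D_add, Ω.D_emb, zero_add]
    rw [Ω.D_mul, Ω.D_T, one_mul] at h1
    rw [eq_div_iff hT.ne']
    linarith
  have hDDh : Ω.D (Ω.D h) / Ω.D h = u + Ω.D u / u := by
    rw [hDh, Ω.D_mul, hDh]
    field_simp
  have hkey : Ω.T * (Ω.D (Ω.D h) / Ω.D h) - Ω.emb (c - 1) =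
      δ + (Ω.T * Ω.D δ) * (Ω.T * u)⁻¹ := by
    rw [hDDh, hDu, map_sub, map_one, hδ]
    field_simp
    ring
  refine ⟨⟨hDh_ne, ?_⟩, hdome⟩
  rw [hkey]
  apply small_add hsδ
  apply small_mul_bdd (small_TD hsδ) (M := 2 / |c|) (by positivity)
  rw [abs_inv]
  have h9 : |Ω.T * u|⁻¹ ≤ (Ω.emb (|c| / 2))⁻¹ :=
    inv_anti₀ hepos hlb
  have h10 : (Ω.emb (|c| / 2))⁻¹ = Ω.emb (2 / |c|) := by
    rw [← map_inv₀]
    congr 1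
    field_simp
  rw [← h10]
  exact h9

end Std

section Flat
variable {O : Type*} [Field O] [LinearOrder O] [IsStrictOrderedRing O] (Ω : OmegaFieldStruct O)

/-- real powers of `T` -/
def Tpow (r : ℝ) : O := Ω.exp (Ω.emb r * Ω.log Ω.T)

variable {Ω}

theorem Tpow_pos (r : ℝ) : 0 < Tpow Ω r := Ω.exp_pos _

theorem D_Tpow (r : ℝ) : Ω.D (Tpow Ω r) = Tpow Ω r * (Ω.emb r / Ω.T) := by
  unfold Tpow
  rw [Ω.D_exp, Ω.D_mul, Ω.D_emb, D_logT]
  ring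

theorem T_mul_Tpow (r : ℝ) : Ω.T * Tpow Ω r = Tpow Ω (r + 1) := by
  have h : Tpow Ω (r + 1) = Tpow Ω r * Ω.T := by
    unfold Tpow
    rw [map_add, map_one, add_mul, one_mul, Ω.exp_add, Ω.exp_log _ (T_pos Ω)]
  rw [h]; ring

theorem logT_pos : 0 < Ω.log Ω.T := by
  have := logT_gtReals Ω 0
  rwa [map_zero] at this

set_option maxHeartbeats 1000000 in
/-- If `g > 0` is flat (`T·g† ≺ 1`) and not asymptotic to a constant, then
`g†` is at least `T^(-1-ε)` for every real `ε > 0`. -/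
theorem flat_lower {g : O} (hg : 0 < g) (hsm : small Ω (Ω.T * (Ω.D g / g)))
    (hne : ¬ domEq g 1) {ε : ℝ} (hε : 0 < ε) :
    ∃ n : ℕ, Tpow Ω (-(1 + ε)) ≤ (n : O) * |Ω.D g / g| := by
  by_contra hcon
  push_neg at hcon
  set u := Ω.D g / g with hu_def
  set P := Tpow Ω (-(1 + ε)) with hP
  have hPpos : 0 < P := Ω.exp_pos _
  have hεpos := emb_pos_of_pos Ω hε
  obtain ⟨n, hn⟩ := exists_nat_gt (1 / ε)
  have hsmall_u : |u| < Ω.emb ε * P := by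
    have h1 := hcon n
    have h2 : (1 : O) ≤ (n : O) * Ω.emb ε := by
      rw [← map_natCast Ω.emb, ← map_mul, ← map_one Ω.emb]
      apply (emb_strictMono Ω).monotone
      rw [div_lt_iff₀ hε] at hn
      nlinarith
    calc |u| = |u| * 1 := (mul_one _).symm
    _ ≤ |u| * ((n : O) * Ω.emb ε) := mul_le_mul_of_nonneg_left h2 (abs_nonneg u)
    _ = ((n : O) * |u|) * Ω.emb ε := by ring
    _ < P * Ω.emb ε := mul_lt_mul_of_pos_right h1 hεpos
    _ = Ω.emb ε * P := mul_comm _ _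
  set φ := Tpow Ω (-ε) with hφ
  have hφpos : 0 < φ := Ω.exp_pos _
  have hφT : Ω.T * P = φ := by rw [hP, hφ, T_mul_Tpow]; norm_num
  have hT := T_pos Ω
  have hDφ : Ω.D φ = -(Ω.emb ε * P) := by
    rw [hφ, D_Tpow, map_neg, ← hφ, ← hφT]
    field_simp
  have hgne : g ≠ 0 := hg.ne'
  have hu_eq : Ω.D g = g * u := by rw [hu_def]; field_simp
  have habs := abs_lt.mp hsmall_u
  -- A = g * exp φ is decreasing hence bounded above
  have hA : Ω.D (g * Ω.exp φ) = (g * Ω.exp φ) * (u + Ω.D φ) := by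
    rw [Ω.D_mul, Ω.D_exp, hu_eq]; ring
  have hApos : 0 < g * Ω.exp φ := mul_pos hg (Ω.exp_pos φ)
  have hAneg : Ω.D (g * Ω.exp φ) < 0 := by
    rw [hA, hDφ]
    apply mul_neg_of_pos_of_neg hApos
    linarith
  have hAnot : ¬ gtReals Ω.emb (g * Ω.exp φ) := fun hgt =>
    absurd (Ω.D_pos_of_gt_reals _ hgt) (not_lt.mpr hAneg.le)
  simp only [gtReals, not_forall, not_lt] at hAnot
  obtain ⟨r, hr⟩ := hAnot
  have hexpφ1 : 1 ≤ Ω.exp φ := by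
    rw [← exp_zero Ω]
    exact Ω.exp_strictMono.monotone hφpos.le
  have hgA : g ≤ g * Ω.exp φ := by nlinarith
  have hgle : domLE g 1 := by
    refine ⟨⌈r⌉₊, ?_⟩
    rw [abs_one, mul_one, abs_of_pos hg]
    calc g ≤ g * Ω.exp φ := hgA
    _ ≤ Ω.emb r := hr
    _ ≤ (⌈r⌉₊ : O) := emb_le_ceil Ω r
  -- B = g * exp (-φ) is increasing hence ≽ 1
  have hexpneg1 : Ω.exp (-φ) ≤ 1 := by
    rw [← exp_zero Ω]
    exact Ω.exp_strictMono.monotone (by linarith)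
  have hBpos0 : 0 < g * Ω.exp (-φ) := mul_pos hg (Ω.exp_pos _)
  have hB : Ω.D (g * Ω.exp (-φ)) = (g * Ω.exp (-φ)) * (u + Ω.emb ε * P) := by
    rw [Ω.D_mul, Ω.D_exp, D_neg, hDφ, hu_eq]; ring
  have hBpos : 0 < Ω.D (g * Ω.exp (-φ)) := by
    rw [hB]
    apply mul_pos hBpos0
    linarith
  have hBge : domLE 1 (g * Ω.exp (-φ)) := by
    by_contra hcon2
    have hgt : gtReals Ω.emb (g * Ω.exp (-φ))⁻¹ := by
      intro r2
      set N : ℕ := ⌈r2⌉₊ + 1 with hN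
      have hnb : (N : O) * (g * Ω.exp (-φ)) < 1 := by
        by_contra hge
        push_neg at hge
        exact hcon2 ⟨N, by
          rw [abs_one, abs_of_pos hBpos0]; exact hge⟩
      have h1 : Ω.emb r2 < (N : O) := by
        have := emb_le_ceil Ω r2
        have h2 : ((⌈r2⌉₊ : ℕ) : O) < (N : O) := by exact_mod_cast Nat.lt_succ_self _
        linarith
      have h2 : (N : O) < (g * Ω.exp (-φ))⁻¹ := by
        have h3 : ((N : O) * (g * Ω.exp (-φ))) * (g * Ω.exp (-φ))⁻¹ <
            1 * (g * Ω.exp (-φ))⁻¹ :=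
          mul_lt_mul_of_pos_right hnb (by positivity)
        rw [mul_assoc, mul_inv_cancel₀ hBpos0.ne', mul_one, one_mul] at h3
        exact h3
      exact h1.trans h2
    have hDinv := Ω.D_pos_of_gt_reals _ hgt
    rw [D_inv Ω hBpos0.ne'] at hDinv
    rw [div_pos_iff] at hDinv
    rcases hDinv with ⟨h1, _⟩ | ⟨_, h2⟩
    · linarith
    · nlinarith [pow_pos hBpos0 2]
  obtain ⟨m, hm⟩ := hBge
  rw [abs_one, abs_of_pos hBpos0] at hm
  have hBleg : g * Ω.exp (-φ) ≤ g := by nlinarith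
  have hge1 : domLE 1 g := by
    refine ⟨m, ?_⟩
    rw [abs_one, abs_of_pos hg]
    nlinarith [(by positivity : (0:O) ≤ (m:O))]
  exact hne ⟨hgle, hge1⟩

set_option maxHeartbeats 1000000 in
/-- If `p > 0` with `T·p ≺ 1` but `p ≽ T^(-1-ε)` for all `ε > 0`, then
`T · p† ∼ -1`. -/
theorem neg_one_small {p : O} (hp : 0 < p) (hsm : small Ω (Ω.T * p))
    (hlow : ∀ ε : ℝ, 0 < ε → ∃ n : ℕ, Tpow Ω (-(1 + ε)) ≤ (n : O) * p) :
    small Ω (Ω.T * (Ω.D p / p) + 1) := by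
  have hT := T_pos Ω
  set w := Ω.T * p with hw
  have hwpos : 0 < w := by positivity
  have hwle : w ≤ 1 := by
    have := hsm 1 one_pos
    rw [map_one] at this
    exact (abs_le.mp this).2
  have hlogw_le : Ω.log w ≤ 0 := by
    have := log_mono Ω hwpos hwle
    rwa [log_one] at this
  have hlogTpos : (0:O) < Ω.log Ω.T := logT_pos
  have hmain : ∀ m : ℕ, (m : O) * |Ω.log w| < Ω.log Ω.T := by
    intro m
    rcases Nat.eq_zero_or_pos m with hm | hm
    · rw [hm]
      push_cast
      rw [zero_mul]
      exact hlogTpos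
    · have hmR : (0:ℝ) < m := by exact_mod_cast hm
      set ε : ℝ := 1 / (2 * m) with hε_def
      have hε : 0 < ε := by positivity
      obtain ⟨n, hn⟩ := hlow ε hε
      set N : ℕ := n + 1 with hNdef
      have hn' : Tpow Ω (-(1 + ε)) ≤ (N : O) * p := by
        refine le_trans hn ?_
        push_cast
        nlinarith [show (N : O) = (n : O) + 1 by simp [hNdef]]
      have hNpos : (0:O) < (N : O) := by
        have : 0 < N := Nat.succ_pos n
        exact_mod_cast this
      have hw_lb : Tpow Ω (-ε) / (N : O) ≤ w := by
        rw [div_le_iff₀ hNpos]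
        calc Tpow Ω (-ε) = Ω.T * Tpow Ω (-(1 + ε)) := by rw [T_mul_Tpow]; norm_num
        _ ≤ Ω.T * ((N : O) * p) := mul_le_mul_of_nonneg_left hn' hT.le
        _ = w * (N : O) := by rw [hw]; ring
      have hlog_lb : Ω.log (Tpow Ω (-ε)) - Ω.log ((N : O)) ≤ Ω.log w := by
        have h1 : Ω.log (Tpow Ω (-ε) / (N : O)) ≤ Ω.log w :=
          log_mono Ω (div_pos (Tpow_pos _) hNpos) hw_lb
        rw [div_eq_mul_inv, log_mul Ω (Tpow_pos _) (inv_pos.mpr hNpos),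
          log_inv Ω hNpos] at h1
        linarith
      have hlogTpow : Ω.log (Tpow Ω (-ε)) = Ω.emb (-ε) * Ω.log Ω.T := Ω.log_exp _
      have hlogN : Ω.log ((N : O)) = Ω.emb (Real.log N) := by
        conv_lhs => rw [← map_natCast Ω.emb N,
          show ((N : ℕ) : ℝ) = Real.exp (Real.log N) from
            (Real.exp_log (by exact_mod_cast Nat.succ_pos n)).symm,
          ← Ω.exp_emb]
        rw [Ω.log_exp]
      have hbound : -Ω.log w ≤ Ω.emb ε * Ω.log Ω.T + Ω.emb (Real.log N) := by
        rw [hlogTpow, hlogN, map_neg] at hlog_lb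
        linarith
      have key : (m : O) * |Ω.log w| ≤
          Ω.emb (m * ε) * Ω.log Ω.T + Ω.emb (m * Real.log N) := by
        rw [abs_of_nonpos hlogw_le]
        calc (m : O) * -Ω.log w
            ≤ (m : O) * (Ω.emb ε * Ω.log Ω.T + Ω.emb (Real.log N)) := by
              apply mul_le_mul_of_nonneg_left hbound (by positivity)
        _ = Ω.emb (m * ε) * Ω.log Ω.T + Ω.emb (m * Real.log N) := by
              rw [map_mul, map_mul, map_natCast]; ring
      have hmε : m * ε = 1 / 2 := by
        rw [hε_def]; field_simp
      rw [hmε] at key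
      have h2 : Ω.emb (m * Real.log N) < Ω.emb (1/2) * Ω.log Ω.T := by
        have h3 : Ω.emb (2 * (m * Real.log N)) < Ω.log Ω.T := logT_gtReals Ω _
        have h4 : Ω.emb (2 * (m * Real.log N)) = 2 * Ω.emb (m * Real.log N) := by
          rw [map_mul, map_ofNat]
        have h5 : Ω.emb (1/2) * 2 = 1 := by
          rw [show (2:O) = Ω.emb 2 from (map_ofNat _ 2).symm, ← map_mul]
          norm_num
        nlinarith [emb_pos_of_pos Ω (by norm_num : (0:ℝ) < 1/2)]
      have h6 : Ω.emb (1/2) * Ω.log Ω.T + Ω.emb (1/2) * Ω.log Ω.T = Ω.log Ω.T := by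
        have h7 : Ω.emb (1/2) + Ω.emb (1/2) = 1 := by
          rw [← map_add, show (1/2 + 1/2 : ℝ) = 1 by norm_num, map_one]
        linear_combination Ω.log Ω.T * h7
      linarith
  have hDlogw : Ω.D (Ω.log w) = 1 / Ω.T + Ω.D p / p := by
    rw [D_log Ω hwpos, hw, Ω.D_mul, Ω.D_T]
    field_simp
  intro r hr
  obtain ⟨n, hn⟩ := exists_nat_gt (1 / r)
  have hn0 : (0:ℝ) < n := lt_trans (by positivity) hn
  have hnO : (0:O) < (n : O) := by exact_mod_cast hn0
  have h1 := lem1 (logT_gtReals Ω) hmain n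
  rw [D_logT, hDlogw] at h1
  have hgoal_eq : |Ω.T * (Ω.D p / p) + 1| = Ω.T * |1 / Ω.T + Ω.D p / p| := by
    have he : Ω.T * (Ω.D p / p) + 1 = Ω.T * (1 / Ω.T + Ω.D p / p) := by
      field_simp
      ring
    rw [he, abs_mul, abs_of_pos hT]
  rw [hgoal_eq]
  have h2 : Ω.T * |1 / Ω.T + Ω.D p / p| < 1 / (n : O) := by
    rw [lt_div_iff₀ hnO]
    have h5 := mul_lt_mul_of_pos_left h1 hT
    have hTT : Ω.T * (1 / Ω.T) = 1 := by field_simp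
    nlinarith [h5]
  have h3 : (1 : O) / (n : O) ≤ Ω.emb r := by
    have e1 : (1 : O) / (n : O) = Ω.emb (1 / n) := by
      rw [map_div₀, map_one, map_natCast]
    rw [e1]
    apply (emb_strictMono Ω).monotone
    rw [div_le_iff₀ hn0]
    have h6 := mul_lt_mul_of_pos_left hn hr
    have h7 : r * (1 / r) = 1 := by field_simp
    nlinarith [h6]
  linarith

set_option maxHeartbeats 1000000 in
/-- Key step: if `g` is flat (`Std g 0`) and `g ≉ 1`, then `Std (D g) (-1)`
and `D g ≼ g / T`. -/
theorem flat_step {g : O} (hs : Std Ω g 0) (hne : ¬ domEq g 1) :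
    Std Ω (Ω.D g) (-1) ∧ domLE (Ω.D g) (g / Ω.T) := by
  obtain ⟨hg0, hsm⟩ := hs
  rw [map_zero, sub_zero] at hsm
  have hT := T_pos Ω
  set u := Ω.D g / g with hu_def
  have hDg_eq : Ω.D g = g * u := by rw [hu_def]; field_simp
  have hu_ne : u ≠ 0 := by
    intro h0
    have hDg : Ω.D g = 0 := by rw [hDg_eq, h0, mul_zero]
    obtain ⟨r, hr⟩ := (Ω.D_eq_zero_iff g).mp hDg
    rcases eq_or_ne r 0 with h | h
    · exact hg0 (by rw [hr, h, map_zero])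
    · apply hne
      have habs : |g| = Ω.emb |r| := by rw [hr, emb_abs]
      have hrpos : (0:ℝ) < |r| := abs_pos.mpr h
      have hepos := emb_pos_of_pos Ω hrpos
      constructor
      · refine ⟨⌈|r|⌉₊, ?_⟩
        rw [abs_one, mul_one, habs]
        exact emb_le_ceil Ω _
      · refine ⟨⌈1/|r|⌉₊, ?_⟩
        rw [abs_one, habs]
        have h8 : Ω.emb (1/|r|) * Ω.emb |r| = 1 := by
          rw [← map_mul]
          rw [show 1/|r| * |r| = 1 by field_simp, map_one]
        nlinarith [emb_le_ceil Ω (1/|r|)]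
  have hlow : ∀ ε : ℝ, 0 < ε → ∃ n : ℕ, Tpow Ω (-(1 + ε)) ≤ (n : O) * |u| := by
    rcases hg0.lt_or_gt with hneg | hpos
    · have hG : (0:O) < -g := by linarith
      have hs2 : small Ω (Ω.T * (Ω.D (-g) / -g)) := by
        rw [D_neg, neg_div_neg_eq]; exact hsm
      have hne2 : ¬ domEq (-g) 1 := fun hd => hne (domEq_neg_left.mp hd)
      intro ε hε
      have hfl := flat_lower hG hs2 hne2 hε
      rw [D_neg, neg_div_neg_eq] at hfl
      exact hfl
    · intro ε hε
      exact flat_lower hpos hsm hne hε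
  have hcore : small Ω (Ω.T * (Ω.D u / u) + 1) := by
    rcases hu_ne.lt_or_gt with hun | hup
    · have hp : 0 < -u := by linarith
      have h1 : small Ω (Ω.T * -u) := by
        intro r hr; rw [mul_neg, abs_neg]; exact hsm r hr
      have h2 : ∀ ε : ℝ, 0 < ε → ∃ n : ℕ, Tpow Ω (-(1 + ε)) ≤ (n : O) * -u := by
        intro ε hε
        obtain ⟨n, hn⟩ := hlow ε hε
        rw [abs_of_neg hun] at hn
        exact ⟨n, hn⟩
      have h3 := neg_one_small hp h1 h2
      rw [D_neg, neg_div_neg_eq] at h3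
      exact h3
    · have h2 : ∀ ε : ℝ, 0 < ε → ∃ n : ℕ, Tpow Ω (-(1 + ε)) ≤ (n : O) * u := by
        intro ε hε
        obtain ⟨n, hn⟩ := hlow ε hε
        rw [abs_of_pos hup] at hn
        exact ⟨n, hn⟩
      exact neg_one_small hup hsm h2
  have hDg_ne : Ω.D g ≠ 0 := by
    rw [hDg_eq]; exact mul_ne_zero hg0 hu_ne
  have hDDg : Ω.D (Ω.D g) / Ω.D g = u + Ω.D u / u := by
    rw [hDg_eq, Ω.D_mul, hDg_eq]
    field_simp
  constructor
  · refine ⟨hDg_ne, ?_⟩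
    have hkey : Ω.T * (Ω.D (Ω.D g) / Ω.D g) - Ω.emb (-1) =
        (Ω.T * u) + (Ω.T * (Ω.D u / u) + 1) := by
      rw [hDDg, map_neg, map_one]; ring
    rw [hkey]
    exact small_add hsm hcore
  · refine ⟨1, ?_⟩
    have h1 := hsm 1 one_pos
    rw [map_one] at h1
    have h1' : Ω.T * |u| ≤ 1 := by
      rw [← abs_of_pos hT, ← abs_mul]; exact h1
    have h2 : |u| ≤ 1 / Ω.T := by
      rw [le_div_iff₀ hT]; linarith [mul_comm Ω.T (|u|)]
    have e1 : |Ω.D g| = |g| * |u| := by rw [hDg_eq, abs_mul]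
    have e2 : |g / Ω.T| = |g| / Ω.T := by rw [abs_div, abs_of_pos hT]
    rw [e1, e2]
    push_cast
    calc |g| * |u| ≤ |g| * (1 / Ω.T) := mul_le_mul_of_nonneg_left h2 (abs_nonneg g)
    _ = 1 * (|g| / Ω.T) := by ring

end Flat

section Iter
variable {O : Type*} [Field O] [LinearOrder O] [IsStrictOrderedRing O] {Ω : OmegaFieldStruct O}

theorem std_iter {h : O} {c : ℝ} (hs : Std Ω h c) (hc : ∀ m : ℕ, c - m ≠ 0) :
    ∀ m : ℕ, Std Ω ((Ω.D)^[m] h) (c - m) := by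
  intro m
  induction m with
  | zero => simpa using hs
  | succ k ih =>
      have hk := std_step ih (hc k)
      rw [Function.iterate_succ_apply']
      have he : c - ((k : ℕ) + 1 : ℕ) = (c - k) - 1 := by push_cast; ring
      rw [he]
      exact hk.1

theorem domEq_iter {h : O} {c : ℝ} (hs : Std Ω h c) (hc : ∀ m : ℕ, c - m ≠ 0) :
    ∀ m : ℕ, domEq ((Ω.D)^[m] h) (h / Ω.T ^ m) := by
  intro m
  induction m with
  | zero =>
      rw [Function.iterate_zero_apply, pow_zero, div_one]
      exact domEq_refl h
  | succ k ih =>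
      have hstep := (std_step (std_iter hs hc k) (hc k)).2
      rw [Function.iterate_succ_apply']
      have h2 : domEq (Ω.D ((Ω.D)^[k] h)) ((h / Ω.T ^ k) / Ω.T) :=
        domEq_trans hstep (domEq_div_pos (T_pos Ω) ih)
      rw [div_div, ← pow_succ] at h2
      exact h2

end Iter

end Stmt11Aux

open Stmt11Aux

/-- **Iterated derivatives, slowly varying case.** Let `f ∈ 𝕆ω` with `f ≉ T^k`
for every `k ∈ ℕ`.  If `f^† ≼ 1/T` (where `f^† = f'/f`), then there is
`ℓ ∈ ℕ` such that for all `n ≥ ℓ`: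
`f⁽ⁿ⁺¹⁾ ≍ f⁽ˡ⁾/T^{n−ℓ+1} ≼ f/T^{n+1}`. -/
theorem statement11 {O : Type*} [Field O] [LinearOrder O] [IsStrictOrderedRing O]
    (Ω : OmegaFieldStruct O) (f : O)
    (hf : ∀ k : ℕ, ¬ domEq f (Ω.T ^ k))
    (hdag : domLE (Ω.D f / f) (1 / Ω.T)) :
    ∃ ℓ : ℕ, ∀ n : ℕ, ℓ ≤ n →
      domEq ((Ω.D)^[n + 1] f) ((Ω.D)^[ℓ] f / Ω.T ^ (n - ℓ + 1)) ∧
      domLE ((Ω.D)^[ℓ] f / Ω.T ^ (n - ℓ + 1)) (f / Ω.T ^ (n + 1)) := by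
  rcases eq_or_ne f 0 with rfl | hf0
  · refine ⟨0, fun n hn => ?_⟩
    have hD0 : ∀ m : ℕ, (Ω.D)^[m] (0 : O) = 0 := by
      intro m
      induction m with
      | zero => simp
      | succ k ih => rw [Function.iterate_succ_apply', ih, D_zero]
    rw [hD0, hD0]
    refine ⟨⟨⟨0, by simp⟩, ⟨0, by simp⟩⟩, ⟨0, by simp⟩⟩
  · have hT := T_pos Ω
    have hbd : ∃ n : ℕ, |Ω.T * (Ω.D f / f)| ≤ (n : O) := by
      obtain ⟨n, hn⟩ := hdag
      refine ⟨n, ?_⟩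
      have habs1T : |1 / Ω.T| = 1 / Ω.T := abs_of_pos (by positivity)
      rw [habs1T] at hn
      rw [abs_mul, abs_of_pos hT]
      calc Ω.T * |Ω.D f / f| ≤ Ω.T * ((n : O) * (1 / Ω.T)) :=
            mul_le_mul_of_nonneg_left hn hT.le
      _ = (n : O) := by field_simp
    obtain ⟨c, hc⟩ := exists_st (Ω := Ω) hbd
    have hstd : Std Ω f c := ⟨hf0, hc⟩
    by_cases hk : ∃ k : ℕ, c = k
    · obtain ⟨k, hk_eq⟩ := hk
      have hpartial : ∀ j : ℕ, j ≤ k →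
          Std Ω ((Ω.D)^[j] f) (c - j) ∧ domEq ((Ω.D)^[j] f) (f / Ω.T ^ j) := by
        intro j
        induction j with
        | zero =>
            intro _
            refine ⟨by simpa using hstd, ?_⟩
            rw [Function.iterate_zero_apply, pow_zero, div_one]
            exact domEq_refl f
        | succ i ih =>
            intro hik
            have hi := ih (by omega)
            have hci : c - i ≠ 0 := by
              rw [hk_eq]
              have hlt : (i : ℝ) < (k : ℝ) := by exact_mod_cast (by omega : i < k)
              intro h0; linarith
            have hstep := std_step hi.1 hci
            constructor
            · rw [Function.iterate_succ_apply']
              have harith : c - ((i : ℕ) + 1 : ℕ) = (c - i) - 1 := by push_cast; ring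
              rw [harith]
              exact hstep.1
            · rw [Function.iterate_succ_apply']
              have h2 := domEq_trans hstep.2 (domEq_div_pos hT hi.2)
              rw [div_div, ← pow_succ] at h2
              exact h2
      obtain ⟨hstd_k, hdome_k⟩ := hpartial k le_rfl
      have hstd_g0 : Std Ω ((Ω.D)^[k] f) 0 := by
        have h0 : c - (k : ℕ) = 0 := by rw [hk_eq]; ring
        rwa [h0] at hstd_k
      have hgne1 : ¬ domEq ((Ω.D)^[k] f) 1 := by
        intro hd
        apply hf k
        have h3 : domEq (f / Ω.T ^ k) 1 := domEq_trans (domEq_symm hdome_k) hd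
        exact domEq_of_div_one (pow_pos hT k) h3
      obtain ⟨hstd_Dg, hDg_le⟩ := flat_step hstd_g0 hgne1
      have hcne : ∀ m : ℕ, (-1 : ℝ) - m ≠ 0 := by
        intro m
        have h5 : (0 : ℝ) ≤ (m : ℝ) := Nat.cast_nonneg m
        intro h0; linarith
      refine ⟨k + 1, fun n hn => ?_⟩
      have e2 : ((Ω.D)^[k + 1] f) = Ω.D ((Ω.D)^[k] f) := Function.iterate_succ_apply' _ _ _
      have hiter : ((Ω.D)^[n + 1] f) = (Ω.D)^[n - (k + 1) + 1] (Ω.D ((Ω.D)^[k] f)) := by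
        rw [← e2, ← Function.iterate_add_apply]
        congr 1
        omega
      have hchain := domEq_iter hstd_Dg hcne (n - (k + 1) + 1)
      constructor
      · rw [hiter, e2]
        exact hchain
      · rw [e2]
        have h4 : domLE (Ω.D ((Ω.D)^[k] f)) (f / Ω.T ^ (k + 1)) := by
          apply domLE_trans hDg_le
          have h5 := domEq_div_pos hT hdome_k
          rw [div_div, ← pow_succ] at h5
          exact h5.1
        have h6 := domLE_div_pos (pow_pos hT (n - (k + 1) + 1)) h4
        have e3 : f / Ω.T ^ (k + 1) / Ω.T ^ (n - (k + 1) + 1) = f / Ω.T ^ (n + 1) := by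
          rw [div_div, ← pow_add, show (k + 1) + (n - (k + 1) + 1) = n + 1 from by omega]
        rw [← e3]
        exact h6
    · have hcne : ∀ m : ℕ, c - m ≠ 0 := fun m h0 => hk ⟨m, by linarith⟩
      refine ⟨0, fun n hn => ?_⟩
      have h1 := domEq_iter hstd hcne (n + 1)
      constructor
      · simpa using h1
      · simp only [Function.iterate_zero_apply, Nat.sub_zero]
        exact domLE_refl _
end

section
/- For every n ∈ ℕ with n ≥ 1 there exists a real number B such that for all real x > B: log^[k](x) > 0 for every k < n, the n-th iterate log^[n] of the natural logarithm is differentiable at x with derivative (log^[n])'(x) = 1/(x · log(x) · log^[2](x) ⋯ log^[n−1](x)) = (∏_{k=0}^{n−1} log^[k](x))⁻¹, and in particular 0 < (log^[n])'(x) ≤ 1/x. -/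
/-- For every `n ∈ ℕ` with `n ≥ 1` there is a real number `B` such that for
all real `x > B`: `log^[k] x > 0` for every `k < n`, the `n`-th iterate
`log^[n]` of the natural logarithm is differentiable at `x` with derivative
`(log^[n])'(x) = 1/(x · log x · log^[2] x ⋯ log^[n−1] x)
             = (∏_{k=0}^{n−1} log^[k] x)⁻¹`,
and in particular `0 < (log^[n])'(x) ≤ 1/x`. -/
theorem statement17 (n : ℕ) (hn : 1 ≤ n) :
    ∃ B : ℝ, ∀ x : ℝ, B < x →
      (∀ k < n, 0 < (Real.log)^[k] x) ∧
      HasDerivAt ((Real.log)^[n])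
        ((∏ k ∈ Finset.range n, (Real.log)^[k] x)⁻¹) x ∧
      0 < (∏ k ∈ Finset.range n, (Real.log)^[k] x)⁻¹ ∧
      (∏ k ∈ Finset.range n, (Real.log)^[k] x)⁻¹ ≤ 1 / x := by
  induction n, hn using Nat.le_induction with
  | base =>
    refine ⟨1, fun x hx => ?_⟩
    have hx0 : (0:ℝ) < x := lt_trans one_pos hx
    have hprod : (∏ k ∈ Finset.range 1, (Real.log)^[k] x) = x := by simp
    rw [hprod]
    refine ⟨fun k hk => ?_, ?_, inv_pos.mpr hx0, by rw [one_div]⟩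
    · interval_cases k
      simpa using hx0
    · simpa using Real.hasDerivAt_log (ne_of_gt hx0)
  | succ n hn ih =>
    obtain ⟨B, hB⟩ := ih
    refine ⟨max (Real.exp B) (Real.exp 1), fun x hx => ?_⟩
    have hx0 : (0:ℝ) < x := lt_trans (Real.exp_pos 1) (lt_of_le_of_lt (le_max_right _ _) hx)
    have hlogB : B < Real.log x := by
      have := lt_of_le_of_lt (le_max_left (Real.exp B) (Real.exp 1)) hx
      calc B = Real.log (Real.exp B) := (Real.log_exp B).symm
        _ < Real.log x := Real.log_lt_log (Real.exp_pos B) this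
    have hlog1 : 1 < Real.log x := by
      have := lt_of_le_of_lt (le_max_right (Real.exp B) (Real.exp 1)) hx
      calc 1 = Real.log (Real.exp 1) := (Real.log_exp 1).symm
        _ < Real.log x := Real.log_lt_log (Real.exp_pos 1) this
    obtain ⟨hpos, hderiv, hQpos, hQle⟩ := hB (Real.log x) hlogB
    have hiter : ∀ k : ℕ, (Real.log)^[k] (Real.log x) = (Real.log)^[k+1] x := by
      intro k; rw [Function.iterate_succ_apply]
    have hprod : (∏ k ∈ Finset.range (n+1), (Real.log)^[k] x)
        = (∏ k ∈ Finset.range n, (Real.log)^[k] (Real.log x)) * x := by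
      rw [Finset.prod_range_succ', Function.iterate_zero_apply]
      exact congrArg (· * x) (Finset.prod_congr rfl fun k _ => (hiter k).symm)
    constructor
    · intro k hk
      rcases Nat.eq_zero_or_pos k with rfl | hk0
      · simpa using hx0
      · obtain ⟨j, rfl⟩ := Nat.exists_eq_succ_of_ne_zero (Nat.pos_iff_ne_zero.mp hk0)
        rw [← hiter j]
        exact hpos j (by omega)
    refine ⟨?_, ?_, ?_⟩
    · have hchain := hderiv.comp x (Real.hasDerivAt_log (ne_of_gt hx0))
      have : ((Real.log)^[n]) ∘ Real.log = (Real.log)^[n+1] := by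
        rw [Function.iterate_succ]
      rw [this] at hchain
      rw [hprod, mul_inv]
      exact hchain
    · rw [hprod, mul_inv]
      exact mul_pos hQpos (inv_pos.mpr hx0)
    · rw [hprod, mul_inv, one_div]
      have h1 : (∏ k ∈ Finset.range n, (Real.log)^[k] (Real.log x))⁻¹ ≤ 1 := by
        calc _ ≤ 1 / Real.log x := hQle
          _ ≤ 1 := by rw [div_le_one (lt_trans one_pos hlog1)]; exact le_of_lt hlog1
      calc _ ≤ 1 * x⁻¹ := by
              exact mul_le_mul_of_nonneg_right h1 (le_of_lt (inv_pos.mpr hx0))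
        _ = x⁻¹ := one_mul _
end
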